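/- Let E > 0 be a real number and N a natural number. Then (1/(π·E)) · ∫_{ℝ²} exp(−(a²+b²)/E) · exp(−(a²+b²)) · Σ_{n=0}^{N} (a²+b²)^n/n! da db = 1 − (E/(1+E))^{N+1}. -/

import Mathlib

open MeasureTheory Real

lemma aux_pow_div_le_exp {x : ℝ} (hx : 0 ≤ x) (n : ℕ) :
    x ^ n / (n.factorial : ℝ) ≤ Real.exp x := by
  calc x ^ n / (n.factorial : ℝ)
      ≤ ∑ i ∈ Finset.range (n + 1), x ^ i / (i.factorial : ℝ) :=
        Finset.single_le_sum (f := fun i => x ^ i / (i.factorial : ℝ))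
          (fun i _ => by positivity) (Finset.self_mem_range_succ n)
    _ ≤ Real.exp x := Real.sum_le_exp_of_nonneg hx _

lemma aux_integrable (c : ℝ) (hc : 0 < c) (n : ℕ) :
    Integrable (fun ab : ℝ × ℝ =>
      (ab.1 ^ 2 + ab.2 ^ 2) ^ n / (n.factorial : ℝ) *
        Real.exp (-c * (ab.1 ^ 2 + ab.2 ^ 2))) := by
  have hc2 : 0 < c / 2 := by positivity
  have hg : Integrable (fun ab : ℝ × ℝ =>
      (2 / c) ^ n * (Real.exp (-(c/2) * ab.1 ^ 2) * Real.exp (-(c/2) * ab.2 ^ 2))) := by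
    rw [Measure.volume_eq_prod]
    exact (((integrable_exp_neg_mul_sq hc2).mul_prod (integrable_exp_neg_mul_sq hc2))).const_mul _
  refine hg.mono' ?_ ?_
  · apply Continuous.aestronglyMeasurable; fun_prop
  · filter_upwards with ab
    have hr : (0:ℝ) ≤ ab.1 ^ 2 + ab.2 ^ 2 := by positivity
    set r := ab.1 ^ 2 + ab.2 ^ 2 with hrdef
    have h1 : ((c/2) * r) ^ n / (n.factorial : ℝ) ≤ Real.exp ((c/2) * r) :=
      aux_pow_div_le_exp (by positivity) n
    have h2 : r ^ n / (n.factorial : ℝ) ≤ (2 / c) ^ n * Real.exp ((c/2) * r) := by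
      calc r ^ n / (n.factorial : ℝ)
          = (2/c) ^ n * (((c/2) * r) ^ n / (n.factorial : ℝ)) := by
            rw [mul_pow, ← mul_div_assoc, ← mul_assoc, ← mul_pow, div_mul_div_comm, mul_comm (2:ℝ) c,
              div_self (by positivity), one_pow, one_mul]
        _ ≤ (2/c) ^ n * Real.exp ((c/2) * r) :=
            mul_le_mul_of_nonneg_left h1 (by positivity)
    have hnorm : ‖r ^ n / (n.factorial : ℝ) * Real.exp (-c * r)‖
        = r ^ n / (n.factorial : ℝ) * Real.exp (-c * r) := by
      rw [Real.norm_eq_abs, abs_of_nonneg]; positivity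
    rw [hnorm]
    calc r ^ n / (n.factorial : ℝ) * Real.exp (-c * r)
        ≤ (2/c) ^ n * Real.exp ((c/2) * r) * Real.exp (-c * r) :=
          mul_le_mul_of_nonneg_right h2 (Real.exp_pos _).le
      _ = (2/c) ^ n * (Real.exp (-(c/2) * ab.1 ^ 2) * Real.exp (-(c/2) * ab.2 ^ 2)) := by
          rw [mul_assoc, ← Real.exp_add, ← Real.exp_add]; congr 2; rw [hrdef]; ring

lemma aux_term_integral (c : ℝ) (hc : 0 < c) (n : ℕ) :
    ∫ ab : ℝ × ℝ, (ab.1 ^ 2 + ab.2 ^ 2) ^ n * Real.exp (-c * (ab.1 ^ 2 + ab.2 ^ 2))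
      = Real.pi * (n.factorial : ℝ) / c ^ (n + 1) := by
  have h := Complex.integral_rpow_mul_exp_neg_mul_rpow (p := 2) (q := 2 * n)
    one_le_two (by have := Nat.cast_nonneg (α := ℝ) n; linarith) hc
  have htrans : (∫ ab : ℝ × ℝ, (ab.1 ^ 2 + ab.2 ^ 2) ^ n * Real.exp (-c * (ab.1 ^ 2 + ab.2 ^ 2)))
      = ∫ z : ℂ, ‖z‖ ^ (2 * (n:ℝ)) * Real.exp (-c * ‖z‖ ^ (2:ℝ)) := by
    rw [← Complex.volume_preserving_equiv_real_prod.integral_comp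
      Complex.measurableEquivRealProd.measurableEmbedding]
    congr 1; ext z
    have hre : Complex.measurableEquivRealProd z = (z.re, z.im) := rfl
    rw [hre]
    have hnorm : z.re ^ 2 + z.im ^ 2 = ‖z‖ ^ 2 := by
      rw [Complex.sq_norm, Complex.normSq_apply]; ring
    simp only [hnorm]
    rw [show ‖z‖ ^ (2:ℝ) = ‖z‖ ^ (2:ℕ) by rw [← Real.rpow_natCast]; norm_num,
      show ‖z‖ ^ (2 * (n:ℝ)) = (‖z‖ ^ (2:ℕ)) ^ n by
        rw [← Real.rpow_natCast ‖z‖ 2, ← Real.rpow_natCast _ n,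
          ← Real.rpow_mul (norm_nonneg z)]
        norm_num]
  rw [htrans, h]
  have h1 : (2 * (n:ℝ) + 2) / 2 = (n:ℝ) + 1 := by ring
  rw [h1, Real.Gamma_nat_eq_factorial n]
  have h3 : c ^ (-(2 * (n:ℝ) + 2) / 2) = (c ^ (n + 1 : ℕ))⁻¹ := by
    rw [show (-(2 * (n:ℝ) + 2) / 2) = -((n:ℝ) + 1) by ring, Real.rpow_neg hc.le]
    congr 1
    rw [← Real.rpow_natCast c (n+1)]
    push_cast
    ring_nf
  rw [h3]
  field_simp

theorem thermal_truncation_identity (E : ℝ) (hE : 0 < E) (N : ℕ) :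
    (1 / (Real.pi * E)) *
        ∫ ab : ℝ × ℝ,
          Real.exp (-(ab.1 ^ 2 + ab.2 ^ 2) / E) * Real.exp (-(ab.1 ^ 2 + ab.2 ^ 2)) *
            ∑ n ∈ Finset.range (N + 1), (ab.1 ^ 2 + ab.2 ^ 2) ^ n / (n.factorial : ℝ) =
      1 - (E / (1 + E)) ^ (N + 1) := by
  set c : ℝ := 1 / E + 1 with hcdef
  have hc : 0 < c := by positivity
  have hrw : ∀ ab : ℝ × ℝ,
      Real.exp (-(ab.1 ^ 2 + ab.2 ^ 2) / E) * Real.exp (-(ab.1 ^ 2 + ab.2 ^ 2)) *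
          ∑ n ∈ Finset.range (N + 1), (ab.1 ^ 2 + ab.2 ^ 2) ^ n / (n.factorial : ℝ)
        = ∑ n ∈ Finset.range (N + 1),
            (ab.1 ^ 2 + ab.2 ^ 2) ^ n / (n.factorial : ℝ) *
              Real.exp (-c * (ab.1 ^ 2 + ab.2 ^ 2)) := by
    intro ab
    rw [← Real.exp_add, Finset.mul_sum]
    refine Finset.sum_congr rfl fun n _ => ?_
    rw [show -(ab.1 ^ 2 + ab.2 ^ 2) / E + -(ab.1 ^ 2 + ab.2 ^ 2)
      = -c * (ab.1 ^ 2 + ab.2 ^ 2) by rw [hcdef]; field_simp; ring]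
    ring
  simp_rw [hrw]
  rw [integral_finset_sum _ (fun n _ => aux_integrable c hc n)]
  have hE1 : (0:ℝ) < 1 + E := by linarith
  have hterm : ∀ n ∈ Finset.range (N + 1),
      (∫ ab : ℝ × ℝ, (ab.1 ^ 2 + ab.2 ^ 2) ^ n / (n.factorial : ℝ) *
        Real.exp (-c * (ab.1 ^ 2 + ab.2 ^ 2)))
      = Real.pi * (E / (1 + E)) ^ (n + 1) := by
    intro n _
    have heq : (fun ab : ℝ × ℝ => (ab.1 ^ 2 + ab.2 ^ 2) ^ n / (n.factorial : ℝ) *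
        Real.exp (-c * (ab.1 ^ 2 + ab.2 ^ 2)))
      = fun ab : ℝ × ℝ => (1 / (n.factorial : ℝ)) *
        ((ab.1 ^ 2 + ab.2 ^ 2) ^ n * Real.exp (-c * (ab.1 ^ 2 + ab.2 ^ 2))) := by
      ext ab; ring
    rw [heq, integral_const_mul, aux_term_integral c hc n]
    have hcval : c = (1 + E) / E := by rw [hcdef]; field_simp
    have hnf : (n.factorial : ℝ) ≠ 0 := by positivity
    rw [hcval, div_pow]
    field_simp [hE1.ne']
    rw [← mul_pow, mul_div_assoc', mul_comm, mul_div_assoc, div_self hE1.ne', mul_one]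
  rw [Finset.sum_congr rfl hterm, ← Finset.mul_sum]
  have hq : E / (1 + E) ≠ 1 := by
    intro h
    have := (div_eq_one_iff_eq (by positivity : (1+E) ≠ 0)).mp h
    linarith
  have hgeom : ∑ n ∈ Finset.range (N + 1), (E / (1 + E)) ^ (n + 1)
      = ((E / (1 + E)) ^ (N + 1) - 1) / (E / (1 + E) - 1) * (E / (1 + E)) := by
    simp_rw [pow_succ]
    rw [← Finset.sum_mul, geom_sum_eq hq, pow_succ]
  rw [hgeom]
  have hpi := Real.pi_pos
  have hq1 : E / (1 + E) - 1 ≠ 0 := sub_ne_zero.mpr hq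
  field_simp
  ring
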